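/- Let ψ = Σ_{k=0}^{3} c_k|Φ_k⟩ be a nonzero vector of ℂ²⊗ℂ² expanded in the magic basis. Then ψ is a product vector (ψ = u⊗v for some u, v ∈ ℂ²) if and only if Σ_{k=0}^{3} c_k² = 0 (the sum of the squares, not squared moduli, of the coefficients vanishes). -/
import Mathlib


open Matrix Complex
open scoped Matrix

noncomputable section

def ketv (i j : Fin 2) : Fin 2 × Fin 2 → ℂ := fun x => if x = (i, j) then 1 else 0

/-- The magic basis of ℂ²⊗ℂ². -/
def magic : Fin 4 → (Fin 2 × Fin 2 → ℂ) :=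
  ![(Real.sqrt 2 : ℂ)⁻¹ • (ketv 0 0 + ketv 1 1),
    (-I) • ((Real.sqrt 2 : ℂ)⁻¹ • (ketv 0 0 - ketv 1 1)),
    (-I) • ((Real.sqrt 2 : ℂ)⁻¹ • (ketv 0 1 + ketv 1 0)),
    (Real.sqrt 2 : ℂ)⁻¹ • (ketv 0 1 - ketv 1 0)]

/-- A vector of ℂ²⊗ℂ² is a product vector if it equals u⊗v for some u, v ∈ ℂ². -/
def IsProductVec (v : Fin 2 × Fin 2 → ℂ) : Prop :=
  ∃ u w : Fin 2 → ℂ, v = fun x => u x.1 * w x.2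

lemma prod_iff_det (v : Fin 2 × Fin 2 → ℂ) (hv : v ≠ 0) :
    IsProductVec v ↔ v (0,0) * v (1,1) - v (0,1) * v (1,0) = 0 := by
  constructor
  · rintro ⟨u, w, rfl⟩
    simp only
    ring
  · intro hdet
    by_cases h00 : v (0,0) ≠ 0
    · refine ⟨![v (0,0), v (1,0)], ![1, v (0,1) / v (0,0)], ?_⟩
      funext x
      obtain ⟨i, j⟩ := x
      fin_cases i <;> fin_cases j <;>
        simp only [Fin.zero_eta, Fin.mk_one, Matrix.cons_val_zero, Matrix.cons_val_one, Matrix.head_cons, mul_one]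
      · rw [mul_div_assoc', mul_comm, mul_div_assoc, div_self h00, mul_one]
      · rw [mul_div_assoc', eq_div_iff h00]
        linear_combination hdet
    · push_neg at h00
      by_cases h01 : v (0,1) = 0
      · refine ⟨![0, 1], ![v (1,0), v (1,1)], ?_⟩
        funext x
        obtain ⟨i, j⟩ := x
        fin_cases i <;> fin_cases j <;>
          simp only [Fin.zero_eta, Fin.mk_one, Matrix.cons_val_zero, Matrix.cons_val_one,
            Matrix.head_cons, zero_mul, one_mul]
        · exact h00
        · exact h01
      · have h10 : v (1,0) = 0 := by
          have h := hdet
          rw [h00, zero_mul, zero_sub, neg_eq_zero, mul_eq_zero] at h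
          exact h.resolve_left h01
        refine ⟨![v (0,1), v (1,1)], ![0, 1], ?_⟩
        funext x
        obtain ⟨i, j⟩ := x
        fin_cases i <;> fin_cases j <;>
          simp only [Fin.zero_eta, Fin.mk_one, Matrix.cons_val_zero, Matrix.cons_val_one,
            Matrix.head_cons, mul_zero, mul_one]
        · exact h00
        · exact h10

/-- A nonzero vector ψ = Σ_k c_k|Φ_k⟩ expanded in the magic basis is a product vector iff
the sum of the squares of its coefficients vanishes. -/
theorem product_iff_sum_sq_coeffs_zero (c : Fin 4 → ℂ)
    (hne : (∑ k, c k • magic k) ≠ 0) :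
    IsProductVec (∑ k, c k • magic k) ↔ ∑ k, (c k) ^ 2 = 0 := by
  set v := ∑ k, c k • magic k with hv
  have hs : ((Real.sqrt 2 : ℝ) : ℂ) * ((Real.sqrt 2 : ℝ) : ℂ) = 2 := by
    rw [← Complex.ofReal_mul, Real.mul_self_sqrt (by norm_num)]
    norm_num
  have hinv : ((Real.sqrt 2 : ℝ) : ℂ)⁻¹ * ((Real.sqrt 2 : ℝ) : ℂ)⁻¹ = 2⁻¹ := by
    rw [← mul_inv, hs]
  have e00 : v (0,0) = (Real.sqrt 2 : ℂ)⁻¹ * (c 0 - I * c 1) := by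
    simp [hv, Fin.sum_univ_four, magic, ketv, Prod.ext_iff]
    ring
  have e11 : v (1,1) = (Real.sqrt 2 : ℂ)⁻¹ * (c 0 + I * c 1) := by
    simp [hv, Fin.sum_univ_four, magic, ketv, Prod.ext_iff]
    ring
  have e01 : v (0,1) = (Real.sqrt 2 : ℂ)⁻¹ * (-I * c 2 + c 3) := by
    simp [hv, Fin.sum_univ_four, magic, ketv, Prod.ext_iff]
    ring
  have e10 : v (1,0) = (Real.sqrt 2 : ℂ)⁻¹ * (-I * c 2 - c 3) := by
    simp [hv, Fin.sum_univ_four, magic, ketv, Prod.ext_iff]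
    ring
  have key : v (0,0) * v (1,1) - v (0,1) * v (1,0)
      = (∑ k, (c k) ^ 2) / 2 := by
    rw [e00, e11, e01, e10, Fin.sum_univ_four]
    linear_combination hinv * ((c 0)^2 - I^2 * (c 1)^2 - I^2 * (c 2)^2 + (c 3)^2)
      - (2:ℂ)⁻¹ * ((c 1)^2 + (c 2)^2) * Complex.I_sq
  rw [prod_iff_det v hne, key, div_eq_zero_iff]
  constructor
  · intro h
    exact h.resolve_right (by norm_num)
  · intro h
    exact Or.inl h

end
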